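/- Deterministic approximate-storage lower bound: if a deterministic scheme with s-bit tables and kt-probe decision-tree queries correctly answers membership for at least half of all n-element subsets of an m-element universe, then (1/2)·binom(m,n) ≤ ∑_{i=0}^{nk} binom(s,i) where k is the number of probes per query, and hence (1/2)(m/n)^n ≤ (e(s+nk)/(nk))^{nk}. -/

import Mathlib

inductive BDTree (s : ℕ) where
  | leaf : Bool → BDTree s
  | node : Fin s → BDTree s → BDTree s → BDTree s

def BDTree.eval {s : ℕ} : BDTree s → (Fin s → Bool) → Bool
  | .leaf b, _ => b
  | .node i t₀ t₁, x => if x i then t₁.eval x else t₀.eval x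

def BDTree.depth {s : ℕ} : BDTree s → ℕ
  | .leaf _ => 0
  | .node _ t₀ t₁ => max t₀.depth t₁.depth + 1

section Aux

variable {s : ℕ}

private def chi (A : Finset (Fin s)) : (Fin s → Bool) → ZMod 2 :=
  fun y => if ∀ i ∈ A, y i = true then 1 else 0

private def Mspan (s d : ℕ) : Submodule (ZMod 2) ((Fin s → Bool) → ZMod 2) :=
  Submodule.span (ZMod 2) (chi '' {A : Finset (Fin s) | A.card ≤ d})

private lemma chi_mul (A B : Finset (Fin s)) : chi A * chi B = chi (A ∪ B) := by
  funext y
  simp only [Pi.mul_apply, chi, Finset.forall_mem_union]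
  split_ifs <;> simp_all

private lemma chi_empty : (chi (∅ : Finset (Fin s))) = 1 := by
  funext y; simp [chi]

private lemma chi_mem {A : Finset (Fin s)} {d : ℕ} (h : A.card ≤ d) :
    chi A ∈ Mspan s d :=
  Submodule.subset_span ⟨A, h, rfl⟩

private lemma Mspan_mono {d d' : ℕ} (h : d ≤ d') : Mspan s d ≤ Mspan s d' :=
  Submodule.span_mono (Set.image_mono fun _ hA => le_trans hA h)

private lemma Mspan_mul_mem {a b : ℕ} {f g : (Fin s → Bool) → ZMod 2}
    (hf : f ∈ Mspan s a) (hg : g ∈ Mspan s b) : f * g ∈ Mspan s (a + b) := by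
  induction hf using Submodule.span_induction with
  | mem f hfm =>
    obtain ⟨A, hA, rfl⟩ := hfm
    induction hg using Submodule.span_induction with
    | mem g hgm =>
      obtain ⟨B, hB, rfl⟩ := hgm
      rw [chi_mul]
      exact chi_mem ((Finset.card_union_le A B).trans (Nat.add_le_add hA hB))
    | zero => rw [mul_zero]; exact (Mspan s (a + b)).zero_mem
    | add u v hu hv hu' hv' => rw [mul_add]; exact (Mspan s (a + b)).add_mem hu' hv'
    | smul r u hu hu' => rw [mul_smul_comm]; exact (Mspan s (a + b)).smul_mem r hu'
  | zero => rw [zero_mul]; exact (Mspan s (a + b)).zero_mem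
  | add u v hu hv hu' hv' => rw [add_mul]; exact (Mspan s (a + b)).add_mem hu' hv'
  | smul r u hu hu' => rw [smul_mul_assoc]; exact (Mspan s (a + b)).smul_mem r hu'

private lemma Mspan_prod_mem {k : ℕ} {ι : Type*} [DecidableEq ι] (F : Finset ι)
    (f : ι → ((Fin s → Bool) → ZMod 2))
    (hf : ∀ i ∈ F, f i ∈ Mspan s k) : ∏ i ∈ F, f i ∈ Mspan s (F.card * k) := by
  induction F using Finset.induction with
  | empty =>
    rw [Finset.prod_empty, ← chi_empty]
    exact chi_mem (by simp)
  | insert x F hx ih =>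
    rw [Finset.prod_insert hx, Finset.card_insert_of_notMem hx]
    have h1 := hf x (Finset.mem_insert_self _ _)
    have h2 := ih fun i hi => hf i (Finset.mem_insert_of_mem hi)
    have := Mspan_mul_mem h1 h2
    have harith : k + F.card * k = (F.card + 1) * k := by ring
    rwa [harith] at this

private lemma tree_mem (t : BDTree s) :
    (fun y => if t.eval y then (1 : ZMod 2) else 0) ∈ Mspan s t.depth := by
  induction t with
  | leaf b =>
    cases b
    · have : (fun y : Fin s → Bool => if (BDTree.leaf false).eval y then (1 : ZMod 2) else 0)
        = 0 := by funext y; simp [BDTree.eval]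
      rw [this]; exact (Mspan s _).zero_mem
    · have : (fun y : Fin s → Bool => if (BDTree.leaf true).eval y then (1 : ZMod 2) else 0)
        = chi ∅ := by funext y; simp [BDTree.eval, chi]
      rw [this]; exact chi_mem (by simp)
  | node i t0 t1 ih0 ih1 =>
    have key : (fun y => if (BDTree.node i t0 t1).eval y then (1 : ZMod 2) else 0)
        = (fun y => if t0.eval y then (1 : ZMod 2) else 0)
          + chi {i} * ((fun y => if t0.eval y then (1 : ZMod 2) else 0)
            + (fun y => if t1.eval y then (1 : ZMod 2) else 0)) := by
      funext y
      simp only [Pi.add_apply, Pi.mul_apply, chi, BDTree.eval, Finset.mem_singleton,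
        forall_eq]
      by_cases hyi : y i = true <;> by_cases h0 : t0.eval y = true <;>
        by_cases h1 : t1.eval y = true <;> simp [hyi, h0, h1] <;> decide
    rw [key, BDTree.depth]
    have hd : max t0.depth t1.depth + 1 = 1 + max t0.depth t1.depth := by omega
    rw [hd]
    refine Submodule.add_mem _ (Mspan_mono (by omega) ih0) ?_
    refine Mspan_mul_mem (chi_mem (by simp)) ?_
    exact Submodule.add_mem _ (Mspan_mono (le_max_left _ _) ih0)
      (Mspan_mono (le_max_right _ _) ih1)

private lemma count_small_subsets (s D : ℕ) :
    (Finset.univ.filter fun A : Finset (Fin s) => A.card ≤ D).card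
      = ∑ i ∈ Finset.range (D + 1), s.choose i := by
  have hset : (Finset.univ.filter fun A : Finset (Fin s) => A.card ≤ D)
      = (Finset.range (D + 1)).biUnion (fun i => Finset.powersetCard i Finset.univ) := by
    ext A
    simp [Finset.mem_powersetCard, Nat.lt_succ_iff]
  rw [hset, Finset.card_biUnion]
  · refine Finset.sum_congr rfl fun i _ => ?_
    rw [Finset.card_powersetCard, Finset.card_univ, Fintype.card_fin]
  · intro a _ b _ hab
    refine Finset.disjoint_left.mpr fun A hA hB => hab ?_
    rw [Finset.mem_powersetCard] at hA hB
    omega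

end Aux

private lemma nat_pow_le_choose_aux {m n : ℕ} (hnm : n ≤ m) :
    m ^ n * n.factorial ≤ n ^ n * m.descFactorial n := by
  have h1 : m ^ n * n.factorial = ∏ i ∈ Finset.range n, m * (n - i) := by
    rw [Finset.prod_mul_distrib, Finset.prod_const, Finset.card_range,
      ← Nat.descFactorial_self, Nat.descFactorial_eq_prod_range]
  have h2 : n ^ n * m.descFactorial n = ∏ i ∈ Finset.range n, n * (m - i) := by
    rw [Finset.prod_mul_distrib, Finset.prod_const, Finset.card_range,
      Nat.descFactorial_eq_prod_range]
  rw [h1, h2]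
  refine Finset.prod_le_prod' fun i hi => ?_
  rw [Finset.mem_range] at hi
  obtain ⟨a, ha⟩ : ∃ a, n = i + a := ⟨n - i, by omega⟩
  obtain ⟨b, hb⟩ : ∃ b, m = i + b := ⟨m - i, by omega⟩
  have hab : a ≤ b := by omega
  subst ha hb
  simp only [Nat.add_sub_cancel_left]
  calc (i + b) * a = i * a + a * b := by ring
    _ ≤ i * b + a * b := by gcongr
    _ = (i + a) * b := by ring

private lemma real_pow_le_choose {m n : ℕ} (hn : 1 ≤ n) (hnm : n ≤ m) :
    ((m : ℝ) / n) ^ n ≤ (m.choose n : ℝ) := by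
  have hnat : m ^ n ≤ n ^ n * m.choose n := by
    have h := nat_pow_le_choose_aux hnm
    rw [Nat.descFactorial_eq_factorial_mul_choose] at h
    have h' : m ^ n * n.factorial ≤ n ^ n * m.choose n * n.factorial := by
      calc m ^ n * n.factorial ≤ n ^ n * (n.factorial * m.choose n) := h
        _ = n ^ n * m.choose n * n.factorial := by ring
    exact Nat.le_of_mul_le_mul_right h' n.factorial_pos
  have hnpos : (0 : ℝ) < (n : ℝ) ^ n := by positivity
  rw [div_pow, div_le_iff₀ hnpos]
  calc ((m : ℝ)) ^ n ≤ ((n : ℝ)) ^ n * (m.choose n : ℝ) := by exact_mod_cast hnat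
    _ = (m.choose n : ℝ) * (n : ℝ) ^ n := by ring

private lemma sum_choose_le_exp (s d : ℕ) (hd : 1 ≤ d) :
    (∑ i ∈ Finset.range (d + 1), (s.choose i : ℝ))
      ≤ (Real.exp 1 * ((s : ℝ) + d) / d) ^ d := by
  set N : ℕ := s + d with hN
  have hdpos : (0 : ℝ) < d := by exact_mod_cast hd
  have hNpos : (0 : ℝ) < N := by
    have : 1 ≤ N := le_trans hd (by omega)
    exact_mod_cast this
  set xr : ℝ := (d : ℝ) / N with hxr
  have hx0 : 0 < xr := div_pos hdpos hNpos
  have hx1 : xr ≤ 1 := by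
    rw [hxr, div_le_one hNpos]
    exact_mod_cast (by omega : d ≤ N)
  have step1 : (∑ i ∈ Finset.range (d + 1), (s.choose i : ℝ))
      ≤ ∑ i ∈ Finset.range (d + 1), (N.choose i : ℝ) := by
    refine Finset.sum_le_sum fun i _ => ?_
    exact_mod_cast Nat.choose_le_choose i (by omega)
  have step2 : xr ^ d * ∑ i ∈ Finset.range (d + 1), (N.choose i : ℝ)
      ≤ ∑ i ∈ Finset.range (d + 1), (N.choose i : ℝ) * xr ^ i := by
    rw [Finset.mul_sum]
    refine Finset.sum_le_sum fun i hi => ?_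
    rw [Finset.mem_range, Nat.lt_succ_iff] at hi
    rw [mul_comm]
    have : xr ^ d ≤ xr ^ i := pow_le_pow_of_le_one hx0.le hx1 hi
    exact mul_le_mul_of_nonneg_left this (by positivity)
  have step3 : ∑ i ∈ Finset.range (d + 1), (N.choose i : ℝ) * xr ^ i
      ≤ ∑ i ∈ Finset.range (N + 1), (N.choose i : ℝ) * xr ^ i := by
    refine Finset.sum_le_sum_of_subset_of_nonneg
      (Finset.range_subset_range.mpr (by omega)) fun i _ _ => by positivity
  have step4 : ∑ i ∈ Finset.range (N + 1), (N.choose i : ℝ) * xr ^ i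
      = (1 + xr) ^ N := by
    rw [add_comm (1 : ℝ) xr, add_pow]
    refine Finset.sum_congr rfl fun i _ => by ring
  have step5 : (1 + xr) ^ N ≤ Real.exp d := by
    calc (1 + xr) ^ N ≤ (Real.exp xr) ^ N := by
          refine pow_le_pow_left₀ (by positivity) ?_ N
          linarith [Real.add_one_le_exp xr]
      _ = Real.exp ((N : ℕ) * xr) := by rw [← Real.exp_nat_mul]
      _ = Real.exp d := by
          congr 1
          rw [hxr, mul_div_assoc']
          field_simp
  have hxd : (0 : ℝ) < xr ^ d := by positivity
  have combined : (∑ i ∈ Finset.range (d + 1), (s.choose i : ℝ)) ≤ Real.exp d / xr ^ d := by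
    rw [le_div_iff₀ hxd]
    calc (∑ i ∈ Finset.range (d + 1), (s.choose i : ℝ)) * xr ^ d
        = xr ^ d * ∑ i ∈ Finset.range (d + 1), (s.choose i : ℝ) := by ring
      _ ≤ xr ^ d * ∑ i ∈ Finset.range (d + 1), (N.choose i : ℝ) := by
          exact mul_le_mul_of_nonneg_left step1 (by positivity)
      _ ≤ (1 + xr) ^ N := by rw [← step4]; exact le_trans step2 step3
      _ ≤ Real.exp d := step5
  refine le_trans combined (le_of_eq ?_)
  have hexp : Real.exp (d : ℝ) = Real.exp 1 ^ d := by
    rw [← Real.exp_nat_mul]; norm_num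
  rw [hxr, div_pow, div_div_eq_mul_div, hexp, hN]
  push_cast
  rw [div_pow, mul_pow]

set_option maxHeartbeats 1000000 in
theorem approximate_storage_lower_bound (m n s k : ℕ)
    (hn : 1 ≤ n) (hnm : n ≤ m) (hk : 1 ≤ k)
    (𝒢 : Finset (Finset (Fin m)))
    (hcard : ∀ S ∈ 𝒢, S.card = n)
    (hsize : (m.choose n : ℝ) / 2 ≤ (𝒢.card : ℝ))
    (x : {S // S ∈ 𝒢} → (Fin s → Bool))
    (tree : Fin m → BDTree s)
    (hdepth : ∀ q, (tree q).depth ≤ k)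
    (hcorrect : ∀ S : {S // S ∈ 𝒢}, ∀ q : Fin m,
      (tree q).eval (x S) = true ↔ q ∈ S.1) :
    𝒢.card ≤ ∑ i ∈ Finset.range (n * k + 1), s.choose i ∧
    (1 / 2 : ℝ) * ((m : ℝ) / n) ^ n
      ≤ (Real.exp 1 * ((s : ℝ) + n * k) / (n * k)) ^ (n * k) := by
  classical
  set D := n * k with hD
  -- the family of functions
  set P : {S // S ∈ 𝒢} → ((Fin s → Bool) → ZMod 2) :=
    fun S => ∏ q ∈ S.1, (fun y => if (tree q).eval y then (1 : ZMod 2) else 0) with hP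
  have hPmem : ∀ S, P S ∈ Mspan s D := by
    intro S
    have h := Mspan_prod_mem S.1
      (fun q => (fun y => if (tree q).eval y then (1 : ZMod 2) else 0))
      (fun q _ => Mspan_mono (hdepth q) (tree_mem (tree q)))
    rwa [hcard S.1 S.2] at h
  have heval : ∀ S T : {S // S ∈ 𝒢}, P S (x T) = if S = T then 1 else 0 := by
    intro S T
    rw [hP]
    simp only [Finset.prod_apply]
    by_cases hST : S = T
    · subst hST
      rw [if_pos rfl]
      refine Finset.prod_eq_one fun q hq => ?_
      simp [(hcorrect S q).mpr hq]
    · rw [if_neg hST]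
      have hnsub : ¬ S.1 ⊆ T.1 := by
        intro hsub
        exact hST (Subtype.ext (Finset.eq_of_subset_of_card_le hsub
          (by rw [hcard S.1 S.2, hcard T.1 T.2])))
      obtain ⟨q, hqS, hqT⟩ := Finset.not_subset.mp hnsub
      refine Finset.prod_eq_zero hqS ?_
      have hq := hcorrect T q
      simp [hqT] at hq
      simp [hq]
  have hli : LinearIndependent (ZMod 2) P := by
    rw [Fintype.linearIndependent_iff]
    intro c hc T
    have h := congrFun hc (x T)
    simp only [Finset.sum_apply, Pi.smul_apply, smul_eq_mul, Pi.zero_apply] at h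
    rw [Finset.sum_congr rfl (fun S _ => by rw [heval S T])] at h
    simpa using h
  -- the generating finset
  set gen : Finset ((Fin s → Bool) → ZMod 2) :=
    (Finset.univ.filter fun A : Finset (Fin s) => A.card ≤ D).image chi with hgen
  have hspan : Mspan s D = Submodule.span (ZMod 2) (gen : Set _) := by
    rw [Mspan, hgen]
    congr 1
    rw [Finset.coe_image, Finset.coe_filter]
    simp
  have hcount : 𝒢.card ≤ ∑ i ∈ Finset.range (D + 1), s.choose i := by
    have hw : Set.range P ≤ ((Submodule.span (ZMod 2) (gen : Set ((Fin s → Bool) → ZMod 2)) : Submodule (ZMod 2) _) : Set ((Fin s → Bool) → ZMod 2)) := by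
      rintro _ ⟨S, rfl⟩
      rw [← hspan]
      exact hPmem S
    have hcard1 := linearIndependent_le_span' P hli (gen : Set ((Fin s → Bool) → ZMod 2)) hw
    rw [Cardinal.mk_fintype] at hcard1
    have hcard2 : Fintype.card {S // S ∈ 𝒢} ≤ Fintype.card (gen : Set ((Fin s → Bool) → ZMod 2)) := by
      exact_mod_cast hcard1
    calc 𝒢.card = Fintype.card {S // S ∈ 𝒢} := (Fintype.card_coe 𝒢).symm
      _ ≤ Fintype.card (gen : Set ((Fin s → Bool) → ZMod 2)) := hcard2
      _ = gen.card := by simp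
      _ ≤ (Finset.univ.filter fun A : Finset (Fin s) => A.card ≤ D).card :=
          Finset.card_image_le
      _ = ∑ i ∈ Finset.range (D + 1), s.choose i := count_small_subsets s D
  refine ⟨hcount, ?_⟩
  have hD1 : 1 ≤ D := by
    rw [hD]; exact Nat.one_le_iff_ne_zero.mpr (by positivity)
  have hreal : (𝒢.card : ℝ) ≤ (Real.exp 1 * ((s : ℝ) + D) / D) ^ D := by
    calc (𝒢.card : ℝ) ≤ ((∑ i ∈ Finset.range (D + 1), s.choose i : ℕ) : ℝ) := by
          exact_mod_cast hcount
      _ = ∑ i ∈ Finset.range (D + 1), (s.choose i : ℝ) := by push_cast; ring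
      _ ≤ (Real.exp 1 * ((s : ℝ) + D) / D) ^ D := sum_choose_le_exp s D hD1
  have hchoose : (1 / 2 : ℝ) * ((m : ℝ) / n) ^ n ≤ (𝒢.card : ℝ) := by
    calc (1 / 2 : ℝ) * ((m : ℝ) / n) ^ n ≤ (1 / 2 : ℝ) * (m.choose n : ℝ) := by
          have := real_pow_le_choose hn hnm
          nlinarith [this]
      _ = (m.choose n : ℝ) / 2 := by ring
      _ ≤ (𝒢.card : ℝ) := hsize
  have := le_trans hchoose hreal
  rw [hD] at this
  push_cast at this ⊢
  exact this
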